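/- arXiv:2101.07331 — 4 statements merged into one kernel-verified Lean document; each statement's English description precedes it below -/
import Mathlib

section
/- Suppose $\phi$ and $\psi$ are real-valued $C^2$ functions on $[z_1,z_2]$ satisfying $-(p\phi')' + q\phi = \lambda r \phi$ and $-(p\psi')' + q\psi = \mu r \psi$ with $\lambda \neq \mu$, both satisfying the $\lambda$-independent boundary condition $a_1\phi(z_1) - b_1 (p\phi')(z_1) = 0$ (and similarly for $\psi$) at $z_1$, and the eigenvalue-dependent boundary condition $-[a_2\phi(z_2) - b_2(p\phi')(z_2)] = \lambda[c_2\phi(z_2) - d_2(p\phi')(z_2)]$ at $z_2$ (with eigenvalue $\mu$ for $\psi$). Let $D_2 = -(a_2 d_2 - b_2 c_2) \neq 0$. Then the orthogonality relation $\int_{z_1}^{z_2}\phi\,\psi\, r\, dz + D_2^{-1}[c_2\phi(z_2)-d_2(p\phi')(z_2)][c_2\psi(z_2)-d_2(p\psi')(z_2)] = 0$ holds. -/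
open MeasureTheory Set

/-- Orthogonality relation (with boundary term) for eigenfunctions of a Sturm-Liouville
problem with an eigenvalue-dependent boundary condition at `z₂`. -/
theorem orthogonality_with_boundary_term (z₁ z₂ : ℝ) (hz : z₁ < z₂)
    (p q r φ ψ : ℝ → ℝ) (lam mu a₁ b₁ a₂ b₂ c₂ d₂ D₂ : ℝ)
    (hp : ContDiff ℝ 1 p) (hppos : ∀ z ∈ Icc z₁ z₂, 0 < p z)
    (hq : ContinuousOn q (Icc z₁ z₂)) (hr : ContinuousOn r (Icc z₁ z₂))
    (hrpos : ∀ z ∈ Icc z₁ z₂, 0 < r z)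
    (hφ : ContDiff ℝ 2 φ) (hψ : ContDiff ℝ 2 ψ)
    (heqφ : ∀ z ∈ Icc z₁ z₂,
      -(deriv (fun x => p x * deriv φ x) z) + q z * φ z = lam * r z * φ z)
    (heqψ : ∀ z ∈ Icc z₁ z₂,
      -(deriv (fun x => p x * deriv ψ x) z) + q z * ψ z = mu * r z * ψ z)
    (hab : (a₁, b₁) ≠ (0, 0))
    (hbc1φ : a₁ * φ z₁ - b₁ * (p z₁ * deriv φ z₁) = 0)
    (hbc1ψ : a₁ * ψ z₁ - b₁ * (p z₁ * deriv ψ z₁) = 0)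
    (hbc2φ : -(a₂ * φ z₂ - b₂ * (p z₂ * deriv φ z₂))
      = lam * (c₂ * φ z₂ - d₂ * (p z₂ * deriv φ z₂)))
    (hbc2ψ : -(a₂ * ψ z₂ - b₂ * (p z₂ * deriv ψ z₂))
      = mu * (c₂ * ψ z₂ - d₂ * (p z₂ * deriv ψ z₂)))
    (hD : D₂ = -(a₂ * d₂ - b₂ * c₂)) (hD0 : D₂ ≠ 0) (hlm : lam ≠ mu) :
    (∫ z in z₁..z₂, φ z * ψ z * r z)
      + D₂⁻¹ * (c₂ * φ z₂ - d₂ * (p z₂ * deriv φ z₂))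
          * (c₂ * ψ z₂ - d₂ * (p z₂ * deriv ψ z₂)) = 0 := by
  -- regularity facts
  have hφ2 : ContDiff ℝ ((1:ℕ)+1) φ := by exact_mod_cast hφ
  have hψ2 : ContDiff ℝ ((1:ℕ)+1) ψ := by exact_mod_cast hψ
  have hdφ : ContDiff ℝ 1 (deriv φ) := (contDiff_succ_iff_deriv.mp hφ2).2.2
  have hdψ : ContDiff ℝ 1 (deriv ψ) := (contDiff_succ_iff_deriv.mp hψ2).2.2
  have hφ1 : ContDiff ℝ 1 φ := hφ.of_le (by norm_num)
  have hψ1 : ContDiff ℝ 1 ψ := hψ.of_le (by norm_num)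
  have hgφ : ContDiff ℝ 1 (fun x => p x * deriv φ x) := hp.mul hdφ
  have hgψ : ContDiff ℝ 1 (fun x => p x * deriv ψ x) := hp.mul hdψ
  -- the Wronskian-type function
  set W : ℝ → ℝ := fun z => p z * deriv φ z * ψ z - p z * deriv ψ z * φ z with hW
  have hWc : ContDiff ℝ 1 W := (hgφ.mul hψ1).sub (hgψ.mul hφ1)
  have hWd : Differentiable ℝ W := hWc.differentiable one_ne_zero
  have hderivW : ∀ z, deriv W z =
      deriv (fun x => p x * deriv φ x) z * ψ z - deriv (fun x => p x * deriv ψ x) z * φ z := by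
    intro z
    have h1 : HasDerivAt (fun x => p x * deriv φ x)
        (deriv (fun x => p x * deriv φ x) z) z :=
      ((hgφ.differentiable one_ne_zero) z).hasDerivAt
    have h2 : HasDerivAt (fun x => p x * deriv ψ x)
        (deriv (fun x => p x * deriv ψ x) z) z :=
      ((hgψ.differentiable one_ne_zero) z).hasDerivAt
    have h3 : HasDerivAt ψ (deriv ψ z) z := ((hψ1.differentiable one_ne_zero) z).hasDerivAt
    have h4 : HasDerivAt φ (deriv φ z) z := ((hφ1.differentiable one_ne_zero) z).hasDerivAt
    have h5 : HasDerivAt W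
        ((deriv (fun x => p x * deriv φ x) z * ψ z + p z * deriv φ z * deriv ψ z)
          - (deriv (fun x => p x * deriv ψ x) z * φ z + p z * deriv ψ z * deriv φ z)) z :=
      (h1.mul h3).sub (h2.mul h4)
    rw [h5.deriv]; ring
  -- FTC
  have hftc : ∫ z in z₁..z₂, deriv W z = W z₂ - W z₁ :=
    intervalIntegral.integral_deriv_eq_sub (fun x _ => hWd x)
      ((hWc.continuous_deriv le_rfl).intervalIntegrable z₁ z₂)
  -- integrand identity on the interval
  have hcong : ∫ z in z₁..z₂, deriv W z = ∫ z in z₁..z₂, (mu - lam) * (φ z * ψ z * r z) := by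
    apply intervalIntegral.integral_congr
    intro z hzmem
    rw [uIcc_of_le hz.le] at hzmem
    have e1 := heqφ z hzmem
    have e2 := heqψ z hzmem
    rw [hderivW z]
    linear_combination ψ z * e2 * 0 + φ z * e2 - ψ z * e1
  have hint : ∫ z in z₁..z₂, (mu - lam) * (φ z * ψ z * r z)
      = (mu - lam) * ∫ z in z₁..z₂, φ z * ψ z * r z := by
    rw [intervalIntegral.integral_const_mul]
  -- W z₁ = 0
  have hW1 : W z₁ = 0 := by
    have hab' : a₁ ≠ 0 ∨ b₁ ≠ 0 := by
      by_contra h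
      push_neg at h
      exact hab (by simp [h.1, h.2])
    rcases hab' with h | h
    · have : W z₁ = (p z₁ * deriv φ z₁ * (a₁ * ψ z₁) - p z₁ * deriv ψ z₁ * (a₁ * φ z₁)) / a₁ := by
        field_simp [hW]; ring
      rw [this]
      rw [show a₁ * ψ z₁ = b₁ * (p z₁ * deriv ψ z₁) by linarith [hbc1ψ],
          show a₁ * φ z₁ = b₁ * (p z₁ * deriv φ z₁) by linarith [hbc1φ]]
      field_simp; ring
    · have : W z₁ = (b₁ * (p z₁ * deriv φ z₁) * ψ z₁ - b₁ * (p z₁ * deriv ψ z₁) * φ z₁) / b₁ := by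
        field_simp [hW]; ring
      rw [this,
          show b₁ * (p z₁ * deriv φ z₁) = a₁ * φ z₁ by linarith [hbc1φ],
          show b₁ * (p z₁ * deriv ψ z₁) = a₁ * ψ z₁ by linarith [hbc1ψ]]
      field_simp; ring
  -- key scalar identity at z₂
  have hW2 : D₂ * W z₂ = (lam - mu) * (c₂ * φ z₂ - d₂ * (p z₂ * deriv φ z₂))
      * (c₂ * ψ z₂ - d₂ * (p z₂ * deriv ψ z₂)) := by
    rw [hW, hD]
    linear_combination (c₂ * ψ z₂ - d₂ * (p z₂ * deriv ψ z₂)) * hbc2φ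
      - (c₂ * φ z₂ - d₂ * (p z₂ * deriv φ z₂)) * hbc2ψ
  -- combine
  have hmain : (mu - lam) * ∫ z in z₁..z₂, φ z * ψ z * r z = W z₂ := by
    rw [← hint, ← hcong, hftc, hW1]; ring
  have hml : mu - lam ≠ 0 := sub_ne_zero.mpr (Ne.symm hlm)
  have : D₂ * ((mu - lam) * ((∫ z in z₁..z₂, φ z * ψ z * r z)
      + D₂⁻¹ * (c₂ * φ z₂ - d₂ * (p z₂ * deriv φ z₂))
        * (c₂ * ψ z₂ - d₂ * (p z₂ * deriv ψ z₂)))) = 0 := by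
    have hinv : D₂ * D₂⁻¹ = 1 := mul_inv_cancel₀ hD0
    linear_combination D₂ * hmain + hW2
      + ((mu - lam) * ((c₂ * φ z₂ - d₂ * (p z₂ * deriv φ z₂))
        * (c₂ * ψ z₂ - d₂ * (p z₂ * deriv ψ z₂)))) * hinv
  have h := mul_ne_zero hD0 hml
  rcases mul_eq_zero.mp this with h1 | h1
  · exact absurd h1 hD0
  rcases mul_eq_zero.mp h1 with h2 | h2
  · exact absurd h2 hml
  exact h2
end

section
/- Let $\mathcal{A}$ be a compact self-adjoint positive operator on a Pontryagin space $\Pi_\kappa$ (an indefinite inner product space with a $\kappa$-dimensional maximal negative subspace), such that $0$ is not an eigenvalue of $\mathcal{A}$. Then every eigenvalue of $\mathcal{A}$ is real, eigenvectors corresponding to negative eigenvalues satisfy $\langle\phi,\phi\rangle < 0$, and eigenvectors corresponding to positive eigenvalues satisfy $\langle\phi,\phi\rangle > 0$. -/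
open MeasureTheory


lemma aux_pos_op_null {E : Type*} [NormedAddCommGroup E] [InnerProductSpace ℂ E]
    (T : E →L[ℂ] E)
    (hsym : ∀ u v : E, (inner ℂ (T u) v : ℂ) = inner ℂ u (T v))
    (hpos : ∀ u : E, 0 ≤ (inner ℂ (T u) u : ℂ).re)
    (x : E) (hx : (inner ℂ (T x) x : ℂ) = 0) : T x = 0 := by
  by_contra hne
  have hy : (0:ℝ) < ‖T x‖ := norm_pos_iff.mpr hne
  have hCim : (inner ℂ (T (T x)) (T x) : ℂ) = (starRingEnd ℂ) (inner ℂ (T (T x)) (T x) : ℂ) := by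
    rw [inner_conj_symm, hsym (T x) (T x)]
  obtain ⟨C, hCdef⟩ : ∃ C : ℝ, (inner ℂ (T (T x)) (T x) : ℂ) = (C:ℂ) :=
    ⟨(inner ℂ (T (T x)) (T x) : ℂ).re, Complex.conj_eq_iff_re.mp hCim.symm ▸ rfl⟩
  have hC0 : 0 ≤ C := by
    have := hpos (T x); rw [hCdef] at this; simpa using this
  obtain ⟨t, htneg, hteq⟩ : ∃ t : ℝ, t < 0 ∧ t * (C + 1) = -(‖T x‖^2) := by
    refine ⟨-(‖T x‖^2) / (C + 1),
      div_neg_of_neg_of_pos (neg_lt_zero.mpr (by positivity)) (by linarith), ?_⟩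
    field_simp
  have key := hpos (x + (t:ℂ) • T x)
  have expand : (inner ℂ (T (x + (t:ℂ) • T x)) (x + (t:ℂ) • T x) : ℂ)
      = inner ℂ (T x) x + (t:ℂ) * inner ℂ (T x) (T x) + (t:ℂ) * inner ℂ (T (T x)) x
        + (t:ℂ)^2 * inner ℂ (T (T x)) (T x) := by
    rw [map_add, T.map_smul]
    simp only [inner_add_left, inner_add_right, inner_smul_left, inner_smul_right,
      Complex.conj_ofReal, smul_eq_mul]
    ring
  have h2 : (inner ℂ (T (T x)) x : ℂ) = inner ℂ (T x) (T x) := hsym (T x) x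
  have h3 : (inner ℂ (T x) (T x) : ℂ) = ((‖T x‖^2 : ℝ):ℂ) := by
    rw [inner_self_eq_norm_sq_to_K]; norm_cast
  rw [expand, hx, h2, h3, hCdef] at key
  have hre : (0:ℝ) ≤ 2 * t * ‖T x‖^2 + t^2 * C := by
    have : ((0:ℂ) + (t:ℂ) * ((‖T x‖^2:ℝ):ℂ) + (t:ℂ) * ((‖T x‖^2:ℝ):ℂ)
        + (t:ℂ)^2 * (C:ℂ)).re = 2 * t * ‖T x‖^2 + t^2 * C := by
      simp only [← Complex.ofReal_pow, ← Complex.ofReal_mul, ← Complex.ofReal_add,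
        ← Complex.ofReal_zero, Complex.ofReal_re]
      ring
    rw [this] at key
    exact key
  nlinarith [sq_nonneg t, mul_pos (neg_pos.mpr htneg) (by positivity : (0:ℝ) < ‖T x‖^2)]

/-- A positive compact self-adjoint operator on a Pontryagin space (modelled as a Hilbert
space `E` with fundamental symmetry `J`, the indefinite inner ℂ product being `⟪J x, y⟫`,
whose negative subspace — the `(-1)`-eigenspace of `J` — has dimension `κ`), with `0` not
an eigenvalue, has only real eigenvalues; eigenvectors of negative eigenvalues have negative
indefinite self-product and those of positive eigenvalues have positive self-product. -/
theorem pontryagin_positive_compact_eigen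
    {E : Type*} [NormedAddCommGroup E] [InnerProductSpace ℂ E] [CompleteSpace E]
    (J A : E →L[ℂ] E) (κ : ℕ)
    (hJsym : ∀ x y : E, (inner ℂ (J x) y : ℂ) = inner ℂ x (J y))
    (hJ2 : ∀ x : E, J (J x) = x)
    (hκ : Module.finrank ℂ (Module.End.eigenspace (J : E →ₗ[ℂ] E) (-1)) = κ)
    (hAcompact : IsCompactOperator A)
    (hAsa : ∀ x y : E, (inner ℂ (J (A x)) y : ℂ) = inner ℂ (J x) (A y))
    (hApos : ∀ x : E, 0 ≤ (inner ℂ (J (A x)) x : ℂ).re ∧ (inner ℂ (J (A x)) x : ℂ).im = 0)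
    (hA0 : ∀ x : E, A x = 0 → x = 0) :
    ∀ (mu : ℂ) (x : E), x ≠ 0 → A x = mu • x →
      mu.im = 0
      ∧ (mu.re < 0 → (inner ℂ (J x) x : ℂ).re < 0)
      ∧ (0 < mu.re → 0 < (inner ℂ (J x) x : ℂ).re) := by
  intro mu x hx hAx
  set c : ℂ := inner ℂ (J x) x with hc
  -- c is real
  have hcim : c.im = 0 := by
    have h1 : (starRingEnd ℂ) c = c := by
      rw [hc, inner_conj_symm, hJsym]
    exact (Complex.conj_eq_iff_im.mp h1)
  -- the indefinite A-product at x
  have hx1 : (inner ℂ (J (A x)) x : ℂ) = (starRingEnd ℂ) mu * c := by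
    rw [hAx, J.map_smul, inner_smul_left, hc]
  have hpos1 := (hApos x).1
  have hpos2 := (hApos x).2
  rw [hx1] at hpos1 hpos2
  have him : mu.im * c.re = 0 := by
    have : ((starRingEnd ℂ) mu * c).im = -(mu.im * c.re) := by
      simp [Complex.mul_im, hcim]
    rw [this] at hpos2; linarith
  have hre : 0 ≤ mu.re * c.re := by
    have : ((starRingEnd ℂ) mu * c).re = mu.re * c.re := by
      simp [Complex.mul_re, hcim]
    rwa [this] at hpos1
  -- c.re ≠ 0
  have hcne : c.re ≠ 0 := by
    intro h0
    have hc0 : c = 0 := Complex.ext h0 hcim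
    have hT : (J.comp A) x = 0 := by
      apply aux_pos_op_null (J.comp A)
      · intro u v
        simp only [ContinuousLinearMap.comp_apply]
        rw [hAsa, hJsym]
      · intro u
        simpa only [ContinuousLinearMap.comp_apply] using (hApos u).1
      · simp only [ContinuousLinearMap.comp_apply]
        rw [hx1, hc0, mul_zero]
    have hA : A x = 0 := by
      have : J (J (A x)) = J 0 := by
        simpa only [ContinuousLinearMap.comp_apply] using congrArg J hT
      rwa [hJ2, map_zero] at this
    exact hx (hA0 x hA)
  refine ⟨?_, ?_, ?_⟩
  · rcases mul_eq_zero.mp him with h | h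
    · exact h
    · exact absurd h hcne
  · intro hmu
    rcases lt_or_gt_of_ne hcne with h | h
    · exact h
    · nlinarith
  · intro hmu
    rcases lt_or_gt_of_ne hcne with h | h
    · nlinarith
    · exact h
end

section
/- Let $\phi$ be a real $C^2$ eigenfunction with eigenvalue $\lambda$ of the problem $-(p\phi')'+q\phi=\lambda r\phi$ on $(z_1,z_2)$, with boundary conditions $b_1(p\phi')(z_1) = a_1\phi(z_1)$ and $-[a_2\phi(z_2)-b_2(p\phi')(z_2)] = \lambda[c_2\phi(z_2)-d_2(p\phi')(z_2)]$, where $p>0$, $r>0$, $q\geq 0$, $a_1/b_1\geq 0$ (with $b_1\neq 0$), $D_2 = -(a_2d_2-b_2c_2)\neq 0$, $a_2c_2/D_2\leq 0$, $b_2d_2/D_2\leq 0$, and $a_2d_2/D_2\geq 0$. Then $\lambda\left[\int_{z_1}^{z_2}\phi^2 r\,dz + D_2^{-1}(c_2\phi(z_2)-d_2(p\phi')(z_2))^2\right] \geq 0$. -/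
open MeasureTheory Set

lemma quad_form_aux (α β γ u v : ℝ) (hα : 0 ≤ α) (hβ : 0 ≤ β) (hγ : 0 ≤ γ)
    (h : α * γ = β ^ 2 + β) : 0 ≤ α * u ^ 2 + 2 * β * u * v + γ * v ^ 2 := by
  rcases eq_or_lt_of_le hγ with hg | hg
  · have hβ0 : β = 0 := by nlinarith
    rw [← hg, hβ0]
    nlinarith [sq_nonneg u]
  · nlinarith [sq_nonneg (β * u + γ * v), mul_nonneg hβ (sq_nonneg u)]

/-- Left-definiteness: under the sign conditions on the boundary coefficients, the
eigenvalue and the Pontryagin squared norm of the eigenfunction have the same sign. -/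
theorem left_definite_sign (z₁ z₂ : ℝ) (hz : z₁ < z₂)
    (p q r φ : ℝ → ℝ) (lam a₁ b₁ a₂ b₂ c₂ d₂ D₂ : ℝ)
    (hp : ContDiff ℝ 1 p) (hppos : ∀ z ∈ Icc z₁ z₂, 0 < p z)
    (hq : ContinuousOn q (Icc z₁ z₂)) (hqnn : ∀ z ∈ Icc z₁ z₂, 0 ≤ q z)
    (hr : ContinuousOn r (Icc z₁ z₂)) (hrpos : ∀ z ∈ Icc z₁ z₂, 0 < r z)
    (hφ : ContDiff ℝ 2 φ)
    (heq : ∀ z ∈ Icc z₁ z₂,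
      -(deriv (fun x => p x * deriv φ x) z) + q z * φ z = lam * r z * φ z)
    (hb₁ : b₁ ≠ 0) (hab₁ : 0 ≤ a₁ / b₁)
    (hbc1 : b₁ * (p z₁ * deriv φ z₁) = a₁ * φ z₁)
    (hbc2 : -(a₂ * φ z₂ - b₂ * (p z₂ * deriv φ z₂))
      = lam * (c₂ * φ z₂ - d₂ * (p z₂ * deriv φ z₂)))
    (hD : D₂ = -(a₂ * d₂ - b₂ * c₂)) (hD0 : D₂ ≠ 0)
    (hac : a₂ * c₂ / D₂ ≤ 0) (hbd : b₂ * d₂ / D₂ ≤ 0) (had : 0 ≤ a₂ * d₂ / D₂) :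
    0 ≤ lam * ((∫ z in z₁..z₂, (φ z) ^ 2 * r z)
      + D₂⁻¹ * (c₂ * φ z₂ - d₂ * (p z₂ * deriv φ z₂)) ^ 2) := by
  have hle : z₁ ≤ z₂ := hz.le
  have huIcc : Set.uIcc z₁ z₂ = Icc z₁ z₂ := Set.uIcc_of_le hle
  set g : ℝ → ℝ := fun x => p x * deriv φ x with hgdef
  have hgx : ∀ x, p x * deriv φ x = g x := fun _ => rfl
  rw [hgx z₁] at hbc1
  rw [hgx z₂] at hbc2 ⊢
  have hφ2 : ContDiff ℝ (1+1) φ := by norm_num; exact hφ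
  have hφ' : ContDiff ℝ 1 (deriv φ) := (contDiff_succ_iff_deriv.mp hφ2).2.2
  have hg1 : ContDiff ℝ 1 g := hp.mul hφ'
  have hgd : ∀ x, HasDerivAt g (deriv g x) x :=
    fun x => ((hg1.differentiable (by norm_num)) x).hasDerivAt
  have hφd : ∀ x, HasDerivAt φ (deriv φ x) x :=
    fun x => ((hφ.differentiable (by norm_num)) x).hasDerivAt
  have hgc : Continuous g := hg1.continuous
  have hg'c : Continuous (deriv g) := hg1.continuous_deriv le_rfl
  -- integrability
  have int1 : IntervalIntegrable (fun z => deriv g z * φ z) volume z₁ z₂ :=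
    (hg'c.mul hφ.continuous).intervalIntegrable _ _
  have int2 : IntervalIntegrable (fun z => g z * deriv φ z) volume z₁ z₂ :=
    (hgc.mul hφ'.continuous).intervalIntegrable _ _
  have intq : IntervalIntegrable (fun z => q z * φ z ^ 2) volume z₁ z₂ := by
    apply ContinuousOn.intervalIntegrable
    rw [huIcc]
    exact hq.mul ((hφ.continuous.pow 2).continuousOn)
  -- integration by parts
  have hibp : (∫ z in z₁..z₂, deriv g z * φ z + g z * deriv φ z)
      = g z₂ * φ z₂ - g z₁ * φ z₁ :=
    intervalIntegral.integral_deriv_mul_eq_sub (fun x _ => hgd x) (fun x _ => hφd x)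
      (hg'c.intervalIntegrable _ _) (hφ'.continuous.intervalIntegrable _ _)
  rw [intervalIntegral.integral_add int1 int2] at hibp
  -- the main identity
  have hL : lam * (∫ z in z₁..z₂, (φ z) ^ 2 * r z)
      = ∫ z in z₁..z₂, (-(deriv g z * φ z) + q z * φ z ^ 2) := by
    rw [← intervalIntegral.integral_const_mul]
    apply intervalIntegral.integral_congr
    intro z hz'
    rw [huIcc] at hz'
    linear_combination (-(φ z)) * heq z hz'
  have hadd := intervalIntegral.integral_add int1.neg intq
  simp only [Pi.neg_apply] at hadd
  rw [intervalIntegral.integral_neg] at hadd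
  rw [hadd] at hL
  -- nonnegative pieces
  have hI2 : 0 ≤ ∫ z in z₁..z₂, g z * deriv φ z := by
    apply intervalIntegral.integral_nonneg hle
    intro x hx
    have := (hppos x hx).le
    simp only [hgdef]
    nlinarith [sq_nonneg (deriv φ x)]
  have hIq : 0 ≤ ∫ z in z₁..z₂, q z * φ z ^ 2 :=
    intervalIntegral.integral_nonneg hle (fun x hx => mul_nonneg (hqnn x hx) (sq_nonneg _))
  have hb : g z₁ * φ z₁ = (a₁ / b₁) * φ z₁ ^ 2 := by
    field_simp
    linear_combination (φ z₁) * hbc1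
  have hb' : 0 ≤ g z₁ * φ z₁ := by
    rw [hb]; exact mul_nonneg hab₁ (sq_nonneg _)
  -- boundary quadratic form at z₂
  obtain ⟨u, hu⟩ : ∃ u, φ z₂ = u := ⟨_, rfl⟩
  obtain ⟨v, hv⟩ : ∃ v, g z₂ = v := ⟨_, rfl⟩
  rw [hu, hv] at hbc2 ⊢
  set α := -(a₂ * c₂ / D₂) with hα
  set β := a₂ * d₂ / D₂ with hβ
  set γ := -(b₂ * d₂ / D₂) with hγ
  have hα0 : 0 ≤ α := by simp only [hα]; linarith
  have hγ0 : 0 ≤ γ := by simp only [hγ]; linarith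
  have hE : c₂ * b₂ - d₂ * a₂ ≠ 0 := fun h => hD0 (by rw [hD]; linarith)
  have hDE : D₂ = c₂ * b₂ - d₂ * a₂ := by rw [hD]; ring
  have hαγ : α * γ = β ^ 2 + β := by
    simp only [hα, hβ, hγ, hDE]
    field_simp
    ring
  have hquad : 0 ≤ α * u ^ 2 + 2 * β * u * v + γ * v ^ 2 :=
    quad_form_aux α β γ u v hα0 had hγ0 hαγ
  have hexp : lam * (D₂⁻¹ * (c₂ * u - d₂ * v) ^ 2)
      = α * u ^ 2 + 2 * β * u * v + γ * v ^ 2 + u * v := by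
    have h1 : lam * (D₂⁻¹ * (c₂ * u - d₂ * v) ^ 2)
        = D₂⁻¹ * (c₂ * u - d₂ * v) * (-(a₂ * u - b₂ * v)) := by
      linear_combination (-(D₂⁻¹ * (c₂ * u - d₂ * v))) * hbc2
    rw [h1]
    simp only [hα, hβ, hγ, hDE]
    field_simp
    ring
  rw [hu, hv] at hibp
  have hA : lam * (∫ z in z₁..z₂, (φ z) ^ 2 * r z)
      = -(v * u) + g z₁ * φ z₁ + (∫ z in z₁..z₂, g z * deriv φ z)
        + (∫ z in z₁..z₂, q z * φ z ^ 2) := by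
    rw [hL]; linarith [hibp]
  have : lam * ((∫ z in z₁..z₂, (φ z) ^ 2 * r z)
      + D₂⁻¹ * (c₂ * u - d₂ * v) ^ 2)
      = g z₁ * φ z₁ + (∫ z in z₁..z₂, g z * deriv φ z)
        + (∫ z in z₁..z₂, q z * φ z ^ 2)
        + (α * u ^ 2 + 2 * β * u * v + γ * v ^ 2) := by
    linear_combination hA + hexp
  rw [this]
  linarith [hb', hI2, hIq, hquad]
end

section
/- Let $H$ be a Hilbert space and $\{\Phi_n\}_{n\geq 0}$ an orthonormal basis of $H = L^2\oplus\mathbb{C}$ where each $\Phi_n = (\phi_n,\beta_n)$. Then the family $\{\phi_n\}_{n\geq 0}$ of $L^2$-components is complete in $L^2$ (its closed span is all of $L^2$) but is not a basis of $L^2$: it is overcomplete, i.e., there exist coefficients $(c_n)$, not all zero, with $\sum_n c_n\phi_n = 0$ in $L^2$. -/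
open MeasureTheory

/-- If `{Φ n}` is an orthonormal (Hilbert) basis of `H = L² ⊕ ℂ` (the `ℓ²` product of a
Hilbert space `E` with `ℂ`), with `Φ n = (φ n, β n)`, then the family of first
components `{φ n}` is complete in `E` (its closed span is everything) but
overcomplete: some nontrivial combination of the `φ n` sums to `0`. -/
theorem first_components_complete_but_overcomplete
    {E : Type*} [NormedAddCommGroup E] [InnerProductSpace ℂ E] [CompleteSpace E]
    (b : HilbertBasis ℕ ℂ (WithLp 2 (E × ℂ))) :
    (Submodule.span ℂ
        (Set.range fun n => (WithLp.equiv 2 (E × ℂ) (b n)).1)).topologicalClosure = ⊤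
    ∧ ∃ c : ℕ → ℂ, c ≠ 0 ∧
        HasSum (fun n => c n • (WithLp.equiv 2 (E × ℂ) (b n)).1) (0 : E) := by
  classical
  set P : WithLp 2 (E × ℂ) →L[ℂ] E :=
    (ContinuousLinearMap.fst ℂ E ℂ).comp
      (WithLp.prodContinuousLinearEquiv 2 ℂ E ℂ).toContinuousLinearMap with hPdef
  have hP : ∀ x : WithLp 2 (E × ℂ), P x = (WithLp.equiv 2 (E × ℂ) x).1 := fun x => rfl
  have hmap : ∀ z ∈ (Submodule.span ℂ (Set.range b) : Set (WithLp 2 (E × ℂ))),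
      P z ∈ (Submodule.span ℂ
        (Set.range fun n => (WithLp.equiv 2 (E × ℂ) (b n)).1) : Set E) := by
    intro z hz
    have : P z ∈ Submodule.map (P : WithLp 2 (E × ℂ) →ₗ[ℂ] E)
        (Submodule.span ℂ (Set.range b)) := ⟨z, hz, rfl⟩
    rw [Submodule.map_span] at this
    refine Submodule.span_mono ?_ this
    rintro _ ⟨_, ⟨n, rfl⟩, rfl⟩
    exact ⟨n, (hP _).symm⟩
  constructor
  · rw [eq_top_iff]
    rintro x -
    set y : WithLp 2 (E × ℂ) := (WithLp.equiv 2 (E × ℂ)).symm (x, 0) with hy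
    have hyc : y ∈ closure (Submodule.span ℂ (Set.range b) : Set (WithLp 2 (E × ℂ))) := by
      have h1 : (Submodule.span ℂ (Set.range ⇑b)).topologicalClosure = ⊤ := b.dense_span
      have h2 : y ∈ (Submodule.span ℂ (Set.range ⇑b)).topologicalClosure :=
        h1 ▸ Submodule.mem_top
      exact h2
    have : P y ∈ closure (Submodule.span ℂ
        (Set.range fun n => (WithLp.equiv 2 (E × ℂ) (b n)).1) : Set E) :=
      map_mem_closure P.continuous hyc hmap
    have hPy : P y = x := rfl
    rw [hPy] at this
    exact this
  · set z : WithLp 2 (E × ℂ) := (WithLp.equiv 2 (E × ℂ)).symm (0, 1) with hz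
    refine ⟨fun n => b.repr z n, ?_, ?_⟩
    · intro h
      have hz0 : z ≠ 0 := by
        intro h0
        have h1 := congrArg (fun w => ((WithLp.equiv 2 (E × ℂ)) w).2) h0
        simp only [hz, Equiv.apply_symm_apply] at h1
        exact one_ne_zero h1
      apply hz0
      have : b.repr z = 0 := by
        ext n
        exact congrFun h n
      have := b.repr.injective (by simpa using this)
      simpa using this
    · have hs := (b.hasSum_repr z).mapL P
      have hPz : P z = 0 := rfl
      rw [hPz] at hs
      exact (by simpa only [_root_.map_smul] using hs : HasSum (fun n => b.repr z n • P (b n)) 0)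
end
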